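/- Let B be a complete normed unital ring (a Banach algebra) with submultiplicative norm, and let (Yₖ) be a sequence in B satisfying Yₖ₊₁ = (3/4)Yₖ² + (1/4)Yₖ³ for all k. If ‖Y₀‖ ≤ 1, then ‖Yₖ‖ ≤ ‖Y₀‖^(2^k) for all k ∈ ℕ. In particular, if ‖Y₀‖ < 1 then Yₖ → 0. -/

import Mathlib

/-- Quadratic convergence of the SIAI residuals: if `Yₖ₊₁ = (3/4)Yₖ² + (1/4)Yₖ³`
and `‖Y₀‖ ≤ 1`, then `‖Yₖ‖ ≤ ‖Y₀‖^(2^k)`; in particular `Yₖ → 0` when `‖Y₀‖ < 1`. -/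
theorem siai_residual_quadratic_convergence {B : Type*} [NormedRing B]
    [NormedAlgebra ℝ B] [CompleteSpace B]
    (Y : ℕ → B)
    (hY : ∀ k, Y (k + 1) = (3/4 : ℝ) • (Y k) ^ 2 + (1/4 : ℝ) • (Y k) ^ 3)
    (h0 : ‖Y 0‖ ≤ 1) :
    (∀ k, ‖Y k‖ ≤ ‖Y 0‖ ^ (2 ^ k)) ∧
      (‖Y 0‖ < 1 → Filter.Tendsto Y Filter.atTop (nhds 0)) := by
  set a := ‖Y 0‖ with ha
  have ha0 : 0 ≤ a := norm_nonneg _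
  have key : ∀ k, ‖Y k‖ ≤ a ^ (2 ^ k) := by
    intro k
    induction k with
    | zero => simp [ha]
    | succ k ih =>
      have hk1 : ‖Y k‖ ≤ 1 := ih.trans (pow_le_one₀ ha0 h0)
      have hnn : 0 ≤ ‖Y k‖ := norm_nonneg _
      have h2 : ‖(Y k) ^ 2‖ ≤ ‖Y k‖ ^ 2 := norm_pow_le' _ (by norm_num)
      have h3 : ‖(Y k) ^ 3‖ ≤ ‖Y k‖ ^ 3 := norm_pow_le' _ (by norm_num)
      have : ‖Y (k + 1)‖ ≤ (3/4 : ℝ) * ‖Y k‖ ^ 2 + (1/4 : ℝ) * ‖Y k‖ ^ 3 := by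
        rw [hY k]
        calc ‖(3/4 : ℝ) • (Y k) ^ 2 + (1/4 : ℝ) • (Y k) ^ 3‖
            ≤ ‖(3/4 : ℝ) • (Y k) ^ 2‖ + ‖(1/4 : ℝ) • (Y k) ^ 3‖ := norm_add_le _ _
          _ ≤ (3/4 : ℝ) * ‖Y k‖ ^ 2 + (1/4 : ℝ) * ‖Y k‖ ^ 3 := by
              rw [norm_smul, norm_smul]
              have : |(3/4 : ℝ)| = 3/4 := by norm_num
              have : |(1/4 : ℝ)| = 1/4 := by norm_num
              gcongr <;> simp
      have hle : ‖Y (k + 1)‖ ≤ ‖Y k‖ ^ 2 := by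
        have h3le2 : ‖Y k‖ ^ 3 ≤ ‖Y k‖ ^ 2 := pow_le_pow_of_le_one hnn hk1 (by norm_num)
        nlinarith
      calc ‖Y (k + 1)‖ ≤ ‖Y k‖ ^ 2 := hle
        _ ≤ (a ^ (2 ^ k)) ^ 2 := by exact pow_le_pow_left₀ hnn ih 2
        _ = a ^ (2 ^ (k + 1)) := by rw [← pow_mul, pow_succ]
  refine ⟨key, fun hlt => ?_⟩
  have htend : Filter.Tendsto (fun k => a ^ (2 ^ k)) Filter.atTop (nhds 0) :=
    (tendsto_pow_atTop_nhds_zero_of_lt_one ha0 hlt).comp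
      (tendsto_pow_atTop_atTop_of_one_lt (α := ℕ) one_lt_two)
  have : Filter.Tendsto (fun k => ‖Y k‖) Filter.atTop (nhds 0) :=
    squeeze_zero (fun k => norm_nonneg _) key htend
  exact tendsto_zero_iff_norm_tendsto_zero.mpr this
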